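/- Let G be a finite p-group and ρ = ρ₁ ⊕ ⋯ ⊕ ρ_m a faithful complex representation of minimal dimension among faithful representations of G, with each ρ_i irreducible and χ_i the character by which ρ_i acts on the p-torsion C of the center. Then χ₁, …, χ_m form a basis of the F_p-vector space C* = Hom(C, μ_p); in particular m = dim_{F_p} C. -/

import Mathlib

/-- A nontrivial normal subgroup of a finite p-group contains a central element of order p. -/
lemma aux_center_elt {p : ℕ} [Fact p.Prime] {G : Type*} [Group G] [Finite G]
    (hG : IsPGroup p G) (N : Subgroup G) [N.Normal] (hN : N ≠ ⊥) :
    ∃ g : G, g ∈ N ∧ g ∈ Subgroup.center G ∧ g ≠ 1 ∧ g ^ p = 1 := by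
  classical
  have hp : p.Prime := Fact.out
  have hG' : IsPGroup p (ConjAct G) := hG.of_equiv ConjAct.toConjAct
  have hNN : Nontrivial N := N.nontrivial_iff_ne_bot.mpr hN
  have hNp : IsPGroup p N := hG.to_subgroup N
  obtain ⟨n, hn0, hn⟩ := hNp.nontrivial_iff_card.mp hNN
  have hdvd : p ∣ Nat.card N := hn ▸ dvd_pow_self _ hn0.ne'
  have h1 : (1 : N) ∈ MulAction.fixedPoints (ConjAct G) N := by
    intro g
    refine Subtype.ext ?_
    rw [ConjAct.Subgroup.val_conj_smul]
    simp
  obtain ⟨b, hb, hb1⟩ := hG'.exists_fixed_point_of_prime_dvd_card_of_fixed_point N hdvd h1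
  have hbZ : (b : G) ∈ Subgroup.center G := by
    rw [Subgroup.mem_center_iff]
    intro g
    have hval : g * (b : G) * g⁻¹ = b := by
      have h2 := congrArg Subtype.val (hb (ConjAct.toConjAct g))
      simpa [ConjAct.Subgroup.val_conj_smul, ConjAct.smul_def] using h2
    calc g * b = (g * b * g⁻¹) * g := by group
    _ = b * g := by rw [hval]
  have hbne : (b : G) ≠ 1 := by
    intro h
    exact hb1 (Subtype.ext (h.trans (OneMemClass.coe_one N).symm)).symm
  obtain ⟨t, ht⟩ := IsPGroup.iff_orderOf.mp hG (b : G)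
  have ht1 : t ≠ 0 := by
    intro h
    rw [h, pow_zero, orderOf_eq_one_iff] at ht
    exact hbne ht
  refine ⟨(b : G) ^ p ^ (t - 1), Subgroup.pow_mem N b.2 _, Subgroup.pow_mem _ hbZ _, ?_, ?_⟩
  · intro h
    have hd := orderOf_dvd_of_pow_eq_one h
    rw [ht] at hd
    have := Nat.le_of_dvd (pow_pos hp.pos _) hd
    exact absurd this (not_le.mpr (Nat.pow_lt_pow_right hp.one_lt (Nat.sub_lt (Nat.pos_of_ne_zero ht1) one_pos)))
  · rw [← pow_mul, ← pow_succ, Nat.sub_add_cancel (Nat.one_le_iff_ne_zero.mpr ht1), ← ht,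
      pow_orderOf_eq_one]


lemma pow_mod_of_pow_eq_one {M : Type*} [Monoid M] {x : M} {n : ℕ} (h : x ^ n = 1) (s : ℕ) :
    x ^ s = x ^ (s % n) := by
  conv_lhs => rw [← Nat.mod_add_div s n]
  rw [pow_add, pow_mul, h, one_pow, mul_one]

/-- Duality cardinality for a (commutative) finite group, phrased with a commutativity
hypothesis so it can be applied to subgroups of the center. -/
lemma aux_dual {A : Type*} [Group A] [Finite A] (hcomm : ∀ a b : A, a * b = b * a) :
    Nat.card (A →* ℂˣ) = Nat.card A ∧ Finite (A →* ℂˣ) := by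
  letI : CommGroup A := { (inferInstance : Group A) with mul_comm := hcomm }
  haveI : NeZero ((Monoid.exponent A : ℂ)) :=
    ⟨Nat.cast_ne_zero.mpr (Monoid.exponent_ne_zero_of_finite)⟩
  obtain ⟨e⟩ := CommGroup.monoidHom_mulEquiv_of_hasEnoughRootsOfUnity A ℂ
  exact ⟨Nat.card_congr e.toEquiv, Finite.of_equiv _ e.toEquiv.symm⟩

/-- Let `G` be a finite p-group, `C` the p-torsion subgroup of its center,
and `ρ = ρ₁ ⊕ ⋯ ⊕ ρ_m` a faithful complex representation of minimal
dimension among faithful representations of `G`, with each `ρ_i`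
irreducible acting on `C` by the scalar character `χ_i`.  Then the `χ_i`
form a basis of the elementary abelian p-group (`𝔽_p`-vector space)
`C* = Hom(C, μ_p)`: they generate it and are `𝔽_p`-independent; in
particular `m = dim_{𝔽_p} C`, i.e. `|C| = p^m`. -/
theorem stmt5 {p : ℕ} (hp : p.Prime) {G : Type*} [Group G] [Finite G]
    (hG : IsPGroup p G)
    (C : Subgroup G) (hC : C ≤ Subgroup.center G)
    (hCp : ∀ c ∈ C, c ^ p = 1)
    (hCfull : ∀ c ∈ Subgroup.center G, c ^ p = 1 → c ∈ C)
    (m : ℕ) (V : Fin m → Type)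
    [∀ i, AddCommGroup (V i)] [∀ i, Module ℂ (V i)]
    [∀ i, FiniteDimensional ℂ (V i)]
    (ρ : ∀ i, Representation ℂ G (V i))
    (hirr : ∀ i, IsSimpleModule (MonoidAlgebra ℂ G) (ρ i).asModule)
    (χ : Fin m → (C →* ℂˣ))
    (hχ : ∀ i (c : C), ρ i (c : G) = (χ i c : ℂ) • (1 : Module.End ℂ (V i)))
    (hfaithful : ∀ g : G, (∀ i, ρ i g = 1) → g = 1)
    (hmin : ∀ (W : Type) [AddCommGroup W] [Module ℂ W] [FiniteDimensional ℂ W]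
      (σ : Representation ℂ G W), (∀ g : G, σ g = 1 → g = 1) →
      (∑ i, Module.finrank ℂ (V i)) ≤ Module.finrank ℂ W) :
    Subgroup.closure (Set.range χ) = (⊤ : Subgroup (C →* ℂˣ)) ∧
      (∀ a : Fin m → ZMod p, (∏ i, χ i ^ (a i).val) = 1 → a = 0) ∧
      Nat.card C = p ^ m := by
  classical
  haveI : Fact p.Prime := ⟨hp⟩
  haveI : NeZero p := ⟨hp.pos.ne'⟩
  -- each V i is nontrivial
  have hVnt : ∀ i, Nontrivial (V i) := by
    intro i
    have h : Nontrivial ((ρ i).asModule) := IsSimpleModule.nontrivial (MonoidAlgebra ℂ G) _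
    exact h
  -- each χ i has order dividing p
  have hχp : ∀ i, (χ i) ^ p = 1 := by
    intro i
    ext c
    have h1 : (c : C) ^ p = 1 := Subtype.ext (by
      simpa using hCp (c : G) c.2)
    have : (χ i) c ^ p = 1 := by rw [← map_pow, h1, map_one]
    exact_mod_cast this
  -- if all χ i vanish at c, then c = 1
  have hsep : ∀ c : C, (∀ i, χ i c = 1) → c = 1 := by
    intro c h
    refine Subtype.ext (hfaithful _ fun i => ?_)
    rw [hχ i c, h i]
    simp
  -- from ρ i c = 1 conclude χ i c = 1
  have hchi_of_rho : ∀ i (c : C), ρ i (c : G) = 1 → χ i c = 1 := by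
    intro i c h
    rw [hχ i c] at h
    obtain ⟨v, hv⟩ := exists_ne (0 : V i)
    have h2 := congrArg (fun f : Module.End ℂ (V i) => f v) h
    simp only [LinearMap.smul_apply, Module.End.one_apply] at h2
    have h3 : ((χ i c : ℂ) - 1) • v = 0 := by
      rw [sub_smul, one_smul, h2, sub_self]
    rcases smul_eq_zero.mp h3 with h4 | h4
    · exact Units.ext (by simpa [sub_eq_zero] using h4)
    · exact absurd h4 hv
  -- independence
  have hindep : ∀ a : Fin m → ZMod p, (∏ i, χ i ^ (a i).val) = 1 → a = 0 := by
    intro a ha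
    by_contra hne
    obtain ⟨j, hj⟩ : ∃ j, a j ≠ 0 := by
      by_contra h
      push_neg at h
      exact hne (funext h)
    -- the direct sum over i ≠ j
    let σ : Representation ℂ G (∀ i : {i : Fin m // i ≠ j}, V i) :=
      { toFun := fun g => LinearMap.pi fun i => (ρ i.1 g).comp (LinearMap.proj i)
        map_one' := by
          apply LinearMap.ext; intro x; funext i
          simp
        map_mul' := fun g h => by
          apply LinearMap.ext; intro x; funext i
          simp }
    have hσ_apply : ∀ g x i, σ g x i = ρ i.1 g (x i) := fun g x i => rfl
    have hσf : ∀ g : G, σ g = 1 → g = 1 := by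
      intro g hg
      by_contra hg1
      have hgker : g ∈ σ.ker := hg
      have hN : σ.ker ≠ ⊥ := by
        intro h
        exact hg1 (Subgroup.mem_bot.mp (h ▸ hgker))
      obtain ⟨c, hcN, hcZ, hc1, hcp⟩ := aux_center_elt hG σ.ker hN
      set cc : C := ⟨c, hCfull c hcZ hcp⟩ with hcc
      -- ρ i c = 1 for i ≠ j
      have hrho1 : ∀ i : Fin m, i ≠ j → ρ i c = 1 := by
        intro i hij
        have hσc : σ c = 1 := hcN
        apply LinearMap.ext
        intro v
        have := congrArg (fun f => f (Pi.single (⟨i, hij⟩ : {i : Fin m // i ≠ j}) v) ⟨i, hij⟩) hσc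
        simpa [hσ_apply] using this
      have hχ1 : ∀ i : Fin m, i ≠ j → χ i cc = 1 := fun i hij =>
        hchi_of_rho i cc (hrho1 i hij)
      -- evaluate the relation at cc
      have heval : (χ j cc) ^ (a j).val = 1 := by
        have h1 : ∏ i, ((χ i) cc) ^ (a i).val = 1 := by
          have := congrArg (fun f : C →* ℂˣ => f cc) ha
          simpa only [MonoidHom.finset_prod_apply, MonoidHom.pow_apply,
            MonoidHom.one_apply] using this
        have h2 : ∏ i, ((χ i) cc) ^ (a i).val = (χ j cc) ^ (a j).val :=
          Finset.prod_eq_single j (fun i _ hij => by simp [hχ1 i hij])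
            (fun h => absurd (Finset.mem_univ j) h)
        rw [← h2]
        exact h1
      have hordp : (χ j cc) ^ p = 1 := by
        have := congrArg (fun f : C →* ℂˣ => f cc) (hχp j)
        simpa using this
      have hχj : χ j cc = 1 := by
        have hd1 : orderOf (χ j cc) ∣ (a j).val := orderOf_dvd_of_pow_eq_one heval
        have hd2 : orderOf (χ j cc) ∣ p := orderOf_dvd_of_pow_eq_one hordp
        have hnd : ¬ p ∣ (a j).val := by
          intro h
          have h0 : (a j).val = 0 := Nat.eq_zero_of_dvd_of_lt h (ZMod.val_lt (a j))
          exact hj ((ZMod.val_eq_zero _).mp h0)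
        have hcop : Nat.Coprime p (a j).val := (Nat.Prime.coprime_iff_not_dvd hp).mpr hnd
        have : orderOf (χ j cc) ∣ 1 := by
          have := Nat.dvd_gcd hd2 hd1
          rwa [Nat.Coprime.gcd_eq_one hcop] at this
        rw [orderOf_eq_one_iff.mp (Nat.dvd_one.mp this)]
      have hall : ∀ i, χ i cc = 1 := by
        intro i
        by_cases hij : i = j
        · rw [hij]; exact hχj
        · exact hχ1 i hij
      have : cc = 1 := hsep cc hall
      exact hc1 (by simpa [hcc, Subtype.ext_iff] using this)
    -- dimension count
    have hle := hmin _ σ hσf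
    have hrank : Module.finrank ℂ (∀ i : {i : Fin m // i ≠ j}, V i)
        = ∑ i ∈ Finset.univ.erase j, Module.finrank ℂ (V i) := by
      rw [Module.finrank_pi_fintype]
      exact (Finset.sum_subtype (p := fun i => i ≠ j) (Finset.univ.erase j)
        (fun i => by simp) (fun i => Module.finrank ℂ (V i))).symm
    have hpos : 0 < Module.finrank ℂ (V j) := by
      have := hVnt j
      exact Module.finrank_pos
    rw [hrank] at hle
    have hsum : ∑ i, Module.finrank ℂ (V i)
        = Module.finrank ℂ (V j) + ∑ i ∈ Finset.univ.erase j, Module.finrank ℂ (V i) :=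
      (Finset.add_sum_erase _ _ (Finset.mem_univ j)).symm
    omega
  -- duality: card (C →* ℂˣ) = card C
  obtain ⟨hcard_dual, hfin_dual⟩ :=
    aux_dual (A := C) (fun a b => Subtype.ext (Subgroup.mem_center_iff.mp (hC b.2) ↑a))
  haveI : Finite (C →* ℂˣ) := hfin_dual
  -- upper bound : C embeds in (μ_p)^m
  haveI : NeZero ((p : ℂ)) := ⟨Nat.cast_ne_zero.mpr hp.pos.ne'⟩
  have hcardC_le : Nat.card C ≤ p ^ m := by
    let f : C → ∀ _ : Fin m, rootsOfUnity p ℂ := fun c i =>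
      ⟨χ i c, (mem_rootsOfUnity p _).mpr (by
        have := congrArg (fun f : C →* ℂˣ => f c) (hχp i)
        simpa using this)⟩
    have hf : Function.Injective f := by
      intro c c' h
      have h1 : ∀ i, χ i (c * c'⁻¹) = 1 := by
        intro i
        have := congrFun h i
        have h2 : χ i c = χ i c' := by
          simpa [f, Subtype.ext_iff] using this
        rw [map_mul, map_inv, h2, mul_inv_cancel]
      have := hsep _ h1
      rwa [mul_inv_eq_one] at this
    calc Nat.card C ≤ Nat.card (∀ _ : Fin m, rootsOfUnity p ℂ) :=
          Nat.card_le_card_of_injective f hf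
    _ = p ^ m := by
        rw [Nat.card_pi, Finset.prod_const, Finset.card_univ, Fintype.card_fin,
          HasEnoughRootsOfUnity.natCard_rootsOfUnity ℂ p]
  -- lower bound via the injective map (Fin m → ZMod p) → (C →* ℂˣ)
  let F : (Fin m → ZMod p) → (C →* ℂˣ) := fun a => ∏ i, χ i ^ (a i).val
  have hF_hom : ∀ a b : Fin m → ZMod p, F (a - b) * F b = F a := by
    intro a b
    simp only [F]
    rw [← Finset.prod_mul_distrib]
    refine Finset.prod_congr rfl fun i _ => MonoidHom.ext fun c => ?_
    have hmodp : (((a - b) i).val + (b i).val) % p = (a i).val % p := by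
      have hab : (a - b) i + b i = a i := by simp
      rw [← hab, ZMod.val_add]
      exact (Nat.mod_mod_of_dvd _ dvd_rfl).symm
    have hcp : (χ i) c ^ p = 1 := by
      simpa using congrArg (fun f : C →* ℂˣ => f c) (hχp i)
    simp only [MonoidHom.mul_apply, MonoidHom.pow_apply]
    rw [← pow_add, pow_mod_of_pow_eq_one hcp, hmodp, ← pow_mod_of_pow_eq_one hcp]
  have hFinj : Function.Injective F := by
    intro a b h
    have h1 : F (a - b) * F b = F b := by rw [hF_hom, h]
    have hF1 : F (a - b) = 1 := MonoidHom.ext fun c => by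
      have := congrArg (fun f : C →* ℂˣ => f c) h1
      simpa using this
    have h2 : a - b = 0 := hindep _ hF1
    funext i
    have := congrFun h2 i
    simpa [sub_eq_zero] using this
  have hrange_le : ∀ a, F a ∈ Subgroup.closure (Set.range χ) :=
    fun a => Subgroup.prod_mem _ fun i _ =>
      Subgroup.pow_mem _ (Subgroup.subset_closure (Set.mem_range_self i)) _
  have hlow : p ^ m ≤ Nat.card (Subgroup.closure (Set.range χ)) := by
    let F' : (Fin m → ZMod p) → {x : C →* ℂˣ // x ∈ Subgroup.closure (Set.range χ)} :=
      fun a => Subtype.mk (F a) (hrange_le a)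
    have hF'inj : Function.Injective F' := fun a b h => hFinj (congrArg Subtype.val h)
    calc p ^ m = Nat.card (Fin m → ZMod p) := by
          simp [Nat.card_pi, Nat.card_zmod]
    _ ≤ Nat.card (Subgroup.closure (Set.range χ)) := Nat.card_le_card_of_injective F' hF'inj
  have hclos_le : Nat.card (Subgroup.closure (Set.range χ)) ≤ Nat.card (C →* ℂˣ) :=
    Nat.card_le_card_of_injective _ Subtype.val_injective
  have hcardC : Nat.card C = p ^ m :=
    le_antisymm hcardC_le (hlow.trans (hclos_le.trans_eq hcard_dual))
  have hclos_eq : Nat.card (Subgroup.closure (Set.range χ)) = Nat.card (C →* ℂˣ) :=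
    le_antisymm hclos_le (by rw [hcard_dual, hcardC]; exact hlow)
  exact ⟨Subgroup.eq_top_of_card_eq _ hclos_eq, hindep, hcardC⟩
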